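/- Let f : ℝⁿ → ℝ be the normal polynomial f(x) = Σ_{i=1}^n a_i x_i⁴ + xᵀBx + dᵀx with B symmetric and not positive semidefinite (so its smallest eigenvalue λ_n(B) < 0), and with a_k := min_{i=1,…,n} a_i > 0. Set t₀ := √(|λ_n(B)| / (2a_k)). Then for every t > t₀ and every x ∈ ℝⁿ, the matrix ∇_{xx}μ_f(x,t) = 12·diag(a₁x₁², …, a_n x_n²) + 2B + 4t²·diag(a) is positive definite; hence μ_f(·,t) is convex on all of ℝⁿ for every t > t₀. -/

import Mathlib

open MeasureTheory Matrix Filter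

/-- Partial derivative of `f` in the `i`-th coordinate direction. -/
noncomputable def pd {n : ℕ} (i : Fin n) (f : (Fin n → ℝ) → ℝ) : (Fin n → ℝ) → ℝ :=
  fun x => fderiv ℝ f x (Pi.single i 1)

/-- The gradient of `f` at `x`, as a vector of first partial derivatives. -/
noncomputable def grad {n : ℕ} (f : (Fin n → ℝ) → ℝ) (x : Fin n → ℝ) : Fin n → ℝ :=
  fun i => pd i f x

/-- The Hessian matrix of `f` at `x`, of second partial derivatives. -/
noncomputable def hess {n : ℕ} (f : (Fin n → ℝ) → ℝ) (x : Fin n → ℝ) :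
    Matrix (Fin n) (Fin n) ℝ :=
  Matrix.of fun i j => pd i (pd j f) x

/-- The Steklov function `μ_f(x,t) = (1/(2t)^n) ∫_{x-t}^{x+t} ⋯ ∫ f`. -/
noncomputable def steklov {n : ℕ} (f : (Fin n → ℝ) → ℝ) (x : Fin n → ℝ) (t : ℝ) : ℝ :=
  (1 / (2 * t) ^ n) * ∫ τ in Set.univ.pi (fun i => Set.Icc (x i - t) (x i + t)), f τ

/-- `f` is a multivariate quartic polynomial: a polynomial of total degree at most 4. -/
def IsMQP {n : ℕ} (f : (Fin n → ℝ) → ℝ) : Prop :=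
  ∃ P : MvPolynomial (Fin n) ℝ, P.totalDegree ≤ 4 ∧ ∀ x, f x = MvPolynomial.eval x P

/-- The closed Euclidean (ℓ₂) ball of radius `L` centered at `0` in `ℝⁿ`. -/
def ball2 {n : ℕ} (L : ℝ) : Set (Fin n → ℝ) := {y | ∑ i, (y i) ^ 2 ≤ L ^ 2}

/-- The Euclidean (ℓ₂) norm of a vector. -/
noncomputable def l2norm {m : ℕ} (v : Fin m → ℝ) : ℝ := Real.sqrt (∑ i, (v i) ^ 2)

lemma box_prod_integral {n : ℕ} (x : Fin n → ℝ) (t : ℝ) (g : Fin n → ℝ → ℝ) :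
    (∫ τ in Set.univ.pi (fun i => Set.Icc (x i - t) (x i + t)), ∏ i, g i (τ i))
      = ∏ i, ∫ s in Set.Icc (x i - t) (x i + t), g i s := by
  rw [← integral_indicator (MeasurableSet.univ_pi (fun i => measurableSet_Icc))]
  have h : (Set.univ.pi fun i => Set.Icc (x i - t) (x i + t)).indicator
      (fun τ => ∏ i, g i (τ i))
      = fun τ => ∏ i, (Set.Icc (x i - t) (x i + t)).indicator (g i) (τ i) := by
    funext τ
    by_cases h : τ ∈ Set.univ.pi fun i => Set.Icc (x i - t) (x i + t)
    · rw [Set.indicator_of_mem h]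
      exact Finset.prod_congr rfl fun i _ =>
        (Set.indicator_of_mem (h i (Set.mem_univ i)) _).symm
    · rw [Set.indicator_of_notMem h]
      have : ∃ i, τ i ∉ Set.Icc (x i - t) (x i + t) := by
        by_contra hc
        push_neg at hc
        exact h (fun i _ => hc i)
      obtain ⟨i, hi⟩ := this
      exact (Finset.prod_eq_zero (Finset.mem_univ i) (Set.indicator_of_notMem hi _)).symm
  rw [h, MeasureTheory.volume_pi, MeasureTheory.integral_fintype_prod_eq_prod (ι := Fin n)
    (fun i => (Set.Icc (x i - t) (x i + t)).indicator (g i))]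
  exact Finset.prod_congr rfl fun i _ => integral_indicator measurableSet_Icc

lemma icc_const {c t : ℝ} (ht : 0 < t) :
    (∫ _s in Set.Icc (c - t) (c + t), (1:ℝ)) = 2 * t := by
  rw [setIntegral_const, measureReal_def, Real.volume_Icc, smul_eq_mul, mul_one,
    ENNReal.toReal_ofReal (by linarith)]
  ring

lemma box_one {n : ℕ} (x : Fin n → ℝ) {t : ℝ} (ht : 0 < t) (i : Fin n) (h : ℝ → ℝ) :
    (∫ τ in Set.univ.pi (fun k => Set.Icc (x k - t) (x k + t)), h (τ i))
      = (∫ s in Set.Icc (x i - t) (x i + t), h s) * (2*t)^(n-1) := by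
  have key := box_prod_integral x t (fun k => if k = i then h else fun _ => 1)
  have hL : (fun τ : Fin n → ℝ => ∏ k, (if k = i then h else fun _ => (1:ℝ)) (τ k))
      = fun τ => h (τ i) := by
    funext τ
    rw [Finset.prod_eq_single i (fun k _ hk => by simp [hk]) (by simp)]
    simp
  rw [hL] at key
  rw [key, ← Finset.mul_prod_erase Finset.univ _ (Finset.mem_univ i)]
  have h2 : ∀ k ∈ Finset.univ.erase i,
      (∫ s in Set.Icc (x k - t) (x k + t),
        (if k = i then h else fun _ => (1:ℝ)) s) = 2 * t := by
    intro k hk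
    rw [if_neg (Finset.ne_of_mem_erase hk)]
    exact icc_const ht
  rw [Finset.prod_congr rfl h2, Finset.prod_const,
    Finset.card_erase_of_mem (Finset.mem_univ i), Finset.card_univ, Fintype.card_fin]
  simp

lemma box_two {n : ℕ} (x : Fin n → ℝ) {t : ℝ} (ht : 0 < t) {i j : Fin n} (hij : i ≠ j)
    (h₁ h₂ : ℝ → ℝ) :
    (∫ τ in Set.univ.pi (fun k => Set.Icc (x k - t) (x k + t)), h₁ (τ i) * h₂ (τ j))
      = (∫ s in Set.Icc (x i - t) (x i + t), h₁ s)
        * (∫ s in Set.Icc (x j - t) (x j + t), h₂ s) * (2*t)^(n-2) := by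
  have key := box_prod_integral x t
    (fun k => if k = i then h₁ else if k = j then h₂ else fun _ => 1)
  have hjmem : j ∈ Finset.univ.erase i := Finset.mem_erase.2 ⟨Ne.symm hij, Finset.mem_univ j⟩
  have hL : (fun τ : Fin n → ℝ =>
      ∏ k, (if k = i then h₁ else if k = j then h₂ else fun _ => (1:ℝ)) (τ k))
      = fun τ => h₁ (τ i) * h₂ (τ j) := by
    funext τ
    rw [← Finset.mul_prod_erase Finset.univ _ (Finset.mem_univ i),
      ← Finset.mul_prod_erase _ _ hjmem,
      Finset.prod_eq_one (fun k hk => by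
        have hk1 := Finset.ne_of_mem_erase hk
        have hk2 := Finset.ne_of_mem_erase (Finset.mem_of_mem_erase hk)
        simp [hk1, hk2])]
    simp [hij, Ne.symm hij]
  rw [hL] at key
  rw [key, ← Finset.mul_prod_erase Finset.univ _ (Finset.mem_univ i),
    ← Finset.mul_prod_erase _ _ hjmem]
  have h2 : ∀ k ∈ (Finset.univ.erase i).erase j,
      (∫ s in Set.Icc (x k - t) (x k + t),
        (if k = i then h₁ else if k = j then h₂ else fun _ => (1:ℝ)) s) = 2 * t := by
    intro k hk
    have hk1 := Finset.ne_of_mem_erase hk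
    have hk2 := Finset.ne_of_mem_erase (Finset.mem_of_mem_erase hk)
    rw [if_neg hk2, if_neg hk1]
    exact icc_const ht
  rw [Finset.prod_congr rfl h2, Finset.prod_const,
    Finset.card_erase_of_mem hjmem, Finset.card_erase_of_mem (Finset.mem_univ i),
    Finset.card_univ, Fintype.card_fin]
  simp [hij, Ne.symm hij, Nat.sub_sub]
  ring

lemma icc_pow {c t : ℝ} (ht : 0 < t) (m : ℕ) :
    (∫ s in Set.Icc (c - t) (c + t), s ^ m)
      = ((c + t) ^ (m + 1) - (c - t) ^ (m + 1)) / (m + 1) := by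
  rw [MeasureTheory.integral_Icc_eq_integral_Ioc,
    ← intervalIntegral.integral_of_le (by linarith), integral_pow]

lemma quad_as_sum {n : ℕ} (B : Matrix (Fin n) (Fin n) ℝ) (v : Fin n → ℝ) :
    v ⬝ᵥ B.mulVec v = ∑ i, ∑ j, B i j * (v i * v j) := by
  simp only [dotProduct, Matrix.mulVec, Finset.mul_sum]
  exact Finset.sum_congr rfl fun i _ => Finset.sum_congr rfl fun j _ => by ring



lemma icc_id {c t : ℝ} (ht : 0 < t) :
    (∫ s in Set.Icc (c - t) (c + t), s) = 2 * t * c := by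
  rw [MeasureTheory.integral_Icc_eq_integral_Ioc,
    ← intervalIntegral.integral_of_le (by linarith : c - t ≤ c + t),
    integral_id]
  ring

lemma steklov_eq {n : ℕ} (a d : Fin n → ℝ) (B : Matrix (Fin n) (Fin n) ℝ)
    (f : (Fin n → ℝ) → ℝ)
    (hf : ∀ x, f x = (∑ i, a i * (x i) ^ 4) + x ⬝ᵥ B.mulVec x + d ⬝ᵥ x)
    {t : ℝ} (ht : 0 < t) (x : Fin n → ℝ) :
    steklov f x t =
      (∑ i, a i * ((x i)^4 + 2*t^2*(x i)^2 + t^4/5))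
      + (∑ i, ∑ j, B i j * (x i * x j + (if i = j then t^2/3 else 0)))
      + ∑ i, d i * x i := by
  have h2t : (2*t)^n ≠ 0 := pow_ne_zero _ (by linarith)
  set box := Set.univ.pi (fun i => Set.Icc (x i - t) (x i + t)) with hboxdef
  have hcpt : IsCompact box := isCompact_univ_pi fun i => isCompact_Icc
  have hint : ∀ g : (Fin n → ℝ) → ℝ, Continuous g → IntegrableOn g box :=
    fun g hg => hg.continuousOn.integrableOn_compact hcpt
  -- rewrite the integrand
  have hfeq : ∀ τ : Fin n → ℝ, f τ = (∑ i, a i * (τ i) ^ 4)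
      + (∑ i, ∑ j, B i j * (τ i * τ j)) + (∑ i, d i * τ i) := by
    intro τ
    rw [hf, quad_as_sum]
    rfl
  have hI : (∫ τ in box, f τ)
      = (∫ τ in box, ∑ i, a i * (τ i) ^ 4)
        + (∫ τ in box, ∑ i, ∑ j, B i j * (τ i * τ j))
        + (∫ τ in box, ∑ i, d i * τ i) := by
    have iA : IntegrableOn (fun τ : Fin n → ℝ => ∑ i, a i * (τ i) ^ 4) box :=
      hint _ (by fun_prop)
    have iQ : IntegrableOn (fun τ : Fin n → ℝ => ∑ i, ∑ j, B i j * (τ i * τ j)) box :=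
      hint _ (by fun_prop)
    have iD : IntegrableOn (fun τ : Fin n → ℝ => ∑ i, d i * τ i) box :=
      hint _ (by fun_prop)
    have iAQ : IntegrableOn
        (fun τ : Fin n → ℝ => (∑ i, a i * (τ i) ^ 4) + ∑ i, ∑ j, B i j * (τ i * τ j)) box :=
      hint _ (by fun_prop)
    rw [MeasureTheory.setIntegral_congr_fun hcpt.measurableSet (fun τ _ => hfeq τ),
      MeasureTheory.integral_add iAQ iD, MeasureTheory.integral_add iA iQ]
  -- piece A
  have hA : (∫ τ in box, ∑ i, a i * (τ i) ^ 4)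
      = (2*t)^n * ∑ i, a i * ((x i)^4 + 2*t^2*(x i)^2 + t^4/5) := by
    rw [MeasureTheory.integral_finset_sum _ (fun i _ => hint _ (by fun_prop))]
    rw [Finset.mul_sum]
    refine Finset.sum_congr rfl fun i _ => ?_
    rw [MeasureTheory.integral_const_mul, box_one x ht i (fun s => s ^ 4), icc_pow ht 4]
    have hpow : (2*t)^n = (2*t)^(n-1) * (2*t) := by
      rw [← pow_succ]; congr 1; have := i.pos; omega
    rw [hpow]; push_cast; ring
  -- piece D
  have hD : (∫ τ in box, ∑ i, d i * τ i) = (2*t)^n * ∑ i, d i * x i := by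
    rw [MeasureTheory.integral_finset_sum _ (fun i _ => hint _ (by fun_prop))]
    rw [Finset.mul_sum]
    refine Finset.sum_congr rfl fun i _ => ?_
    rw [MeasureTheory.integral_const_mul, box_one x ht i (fun s => s), icc_id ht]
    have hpow : (2*t)^n = (2*t)^(n-1) * (2*t) := by
      rw [← pow_succ]; congr 1; have := i.pos; omega
    rw [hpow]; ring
  -- piece Q
  have hpair : ∀ i j : Fin n, (∫ τ in box, τ i * τ j)
      = (2*t)^n * (x i * x j + (if i = j then t^2/3 else 0)) := by
    intro i j
    by_cases hij : i = j
    · subst hij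
      have hsq : (∫ τ in box, τ i * τ i) = ∫ τ in box, (τ i)^2 := by
        refine MeasureTheory.setIntegral_congr_fun hcpt.measurableSet (fun τ _ => ?_)
        ring
      rw [hsq, box_one x ht i (fun s => s ^ 2), icc_pow ht 2]
      have hpow : (2*t)^n = (2*t)^(n-1) * (2*t) := by
        rw [← pow_succ]; congr 1; have := i.pos; omega
      rw [hpow]; simp; push_cast; ring
    · rw [box_two x ht hij (fun s => s) (fun s => s), icc_id ht, icc_id ht]
      have hnt : Nontrivial (Fin n) := ⟨⟨i, j, hij⟩⟩
      have h1n : 1 < n := by simpa using Fintype.one_lt_card (α := Fin n)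
      have hpow : (2*t)^n = (2*t)^(n-2) * (2*t)^2 := by
        rw [← pow_add]; congr 1; omega
      rw [hpow]; simp [hij]; ring
  have hQ : (∫ τ in box, ∑ i, ∑ j, B i j * (τ i * τ j))
      = (2*t)^n * ∑ i, ∑ j, B i j * (x i * x j + (if i = j then t^2/3 else 0)) := by
    rw [MeasureTheory.integral_finset_sum _ (fun i _ => hint _ (by fun_prop))]
    rw [Finset.mul_sum]
    refine Finset.sum_congr rfl fun i _ => ?_
    rw [MeasureTheory.integral_finset_sum _ (fun j _ => hint _ (by fun_prop))]
    rw [Finset.mul_sum]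
    refine Finset.sum_congr rfl fun j _ => ?_
    rw [MeasureTheory.integral_const_mul, hpair i j]
    ring
  rw [steklov, hI, hA, hQ, hD]
  rw [one_div, ← mul_add, ← mul_add, inv_mul_cancel_left₀ h2t]

variable {n : ℕ}

noncomputable abbrev pr (i : Fin n) : (Fin n → ℝ) →L[ℝ] ℝ :=
  ContinuousLinearMap.proj i

lemma hasG (a d : Fin n → ℝ) (B : Matrix (Fin n) (Fin n) ℝ) (t : ℝ) (x : Fin n → ℝ) :
    HasFDerivAt (fun y : Fin n → ℝ =>
      (∑ i, a i * ((y i)^4 + 2*t^2*(y i)^2 + t^4/5))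
      + (∑ i, ∑ j, B i j * (y i * y j + (if i = j then t^2/3 else 0)))
      + ∑ i, d i * y i)
      ((∑ i, (a i * (4*(x i)^3 + 4*t^2*(x i))) • pr i)
        + (∑ i, ∑ j, ((B i j * x j) • pr i + (B i j * x i) • pr j))
        + ∑ i, (d i) • pr i) x := by
  have h1 : ∀ i : Fin n, HasFDerivAt
      (fun y : Fin n → ℝ => a i * ((y i)^4 + 2*t^2*(y i)^2 + t^4/5))
      ((a i * (4*(x i)^3 + 4*t^2*(x i))) • pr i) x := by
    intro i
    have e4 := (hasDerivAt_pow 4 (x i)).comp_hasFDerivAt x (show HasFDerivAt (fun y : Fin n → ℝ => y i) (pr i) x from hasFDerivAt_apply i x)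
    have e2 := (hasDerivAt_pow 2 (x i)).comp_hasFDerivAt x (show HasFDerivAt (fun y : Fin n → ℝ => y i) (pr i) x from hasFDerivAt_apply i x)
    have := ((e4.add (e2.const_mul (2*t^2))).add_const (t^4/5)).const_mul (a i)
    refine this.congr_fderiv ?_
    ext v
    simp
    ring
  have h2 : ∀ i j : Fin n, HasFDerivAt
      (fun y : Fin n → ℝ => B i j * (y i * y j + (if i = j then t^2/3 else 0)))
      ((B i j * x j) • pr i + (B i j * x i) • pr j) x := by
    intro i j
    have := (((show HasFDerivAt (fun y : Fin n → ℝ => y i) (pr i) x from hasFDerivAt_apply i x).mul (show HasFDerivAt (fun y : Fin n → ℝ => y j) (pr j) x from hasFDerivAt_apply j x)).add_const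
      (if i = j then t^2/3 else 0)).const_mul (B i j)
    refine this.congr_fderiv ?_
    ext v
    simp
    ring
  have h3 : ∀ i : Fin n, HasFDerivAt (fun y : Fin n → ℝ => d i * y i) ((d i) • pr i) x := by
    intro i
    exact (show HasFDerivAt (fun y : Fin n → ℝ => y i) (pr i) x from hasFDerivAt_apply i x).const_mul (d i)
  exact ((HasFDerivAt.fun_sum (fun i _ => h1 i)).add
    (HasFDerivAt.fun_sum (fun i _ => HasFDerivAt.fun_sum (fun j _ => h2 i j)))).add
      (HasFDerivAt.fun_sum (fun i _ => h3 i))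

lemma pdG (a d : Fin n → ℝ) (B : Matrix (Fin n) (Fin n) ℝ) (t : ℝ) (j : Fin n) :
    pd j (fun y : Fin n → ℝ =>
      (∑ i, a i * ((y i)^4 + 2*t^2*(y i)^2 + t^4/5))
      + (∑ i, ∑ j, B i j * (y i * y j + (if i = j then t^2/3 else 0)))
      + ∑ i, d i * y i)
    = fun x => a j * (4*(x j)^3 + 4*t^2*(x j))
        + ((∑ i, B i j * x i) + (∑ l, B j l * x l)) + d j := by
  funext x
  show fderiv ℝ _ x (Pi.single j 1) = _
  rw [(hasG a d B t x).fderiv]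
  simp [Pi.single_apply, Finset.sum_add_distrib, mul_ite, Finset.mul_sum]
  ring

lemma hasPg (a d : Fin n → ℝ) (B : Matrix (Fin n) (Fin n) ℝ) (t : ℝ) (j : Fin n)
    (x : Fin n → ℝ) :
    HasFDerivAt (fun y : Fin n → ℝ => a j * (4*(y j)^3 + 4*t^2*(y j))
        + ((∑ i, B i j * y i) + (∑ l, B j l * y l)) + d j)
      ((a j * (12*(x j)^2 + 4*t^2)) • pr j
        + ((∑ i, (B i j) • pr i) + (∑ l, (B j l) • pr l))) x := by
  have e3 := (hasDerivAt_pow 3 (x j)).comp_hasFDerivAt x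
    (show HasFDerivAt (fun y : Fin n → ℝ => y j) (pr j) x from hasFDerivAt_apply j x)
  have h1 : HasFDerivAt (fun y : Fin n → ℝ => a j * (4*(y j)^3 + 4*t^2*(y j)))
      ((a j * (12*(x j)^2 + 4*t^2)) • pr j) x := by
    have := ((e3.const_mul 4).add
      ((show HasFDerivAt (fun y : Fin n → ℝ => y j) (pr j) x from hasFDerivAt_apply j x).const_mul
        (4*t^2))).const_mul (a j)
    refine this.congr_fderiv ?_
    ext v
    simp
    ring
  have h2 : HasFDerivAt (fun y : Fin n → ℝ => (∑ i, B i j * y i) + (∑ l, B j l * y l))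
      ((∑ i, (B i j) • pr i) + (∑ l, (B j l) • pr l)) x :=
    (HasFDerivAt.fun_sum (fun i _ =>
        (show HasFDerivAt (fun y : Fin n → ℝ => y i) (pr i) x from hasFDerivAt_apply i x).const_mul
          (B i j))).add
      (HasFDerivAt.fun_sum (fun l _ =>
        (show HasFDerivAt (fun y : Fin n → ℝ => y l) (pr l) x from hasFDerivAt_apply l x).const_mul
          (B j l)))
  exact (h1.add h2).add_const (d j)

lemma pdPg (a d : Fin n → ℝ) (B : Matrix (Fin n) (Fin n) ℝ) (t : ℝ) (i j : Fin n) :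
    pd i (fun y : Fin n → ℝ => a j * (4*(y j)^3 + 4*t^2*(y j))
        + ((∑ i, B i j * y i) + (∑ l, B j l * y l)) + d j)
    = fun x => (if i = j then a j * (12*(x j)^2 + 4*t^2) else 0) + (B i j + B j i) := by
  funext x
  show fderiv ℝ _ x (Pi.single i 1) = _
  rw [(hasPg a d B t j x).fderiv]
  by_cases hij : i = j
  · subst hij
    simp [Pi.single_apply]
  · simp [Pi.single_apply, hij]

lemma rayleigh {n : ℕ} (B : Matrix (Fin n) (Fin n) ℝ) (lamB : ℝ)
    (h1 : ∀ v : Fin n → ℝ, (∑ i, (v i) ^ 2) = 1 → lamB ≤ v ⬝ᵥ B.mulVec v)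
    (z : Fin n → ℝ) : lamB * (∑ i, (z i) ^ 2) ≤ z ⬝ᵥ B.mulVec z := by
  by_cases hz : (∑ i, (z i) ^ 2) = 0
  · have hz0 : z = 0 := by
      funext i
      have := (Finset.sum_eq_zero_iff_of_nonneg (fun i _ => sq_nonneg (z i))).1 hz i
        (Finset.mem_univ i)
      exact pow_eq_zero_iff (by norm_num) |>.1 this
    simp [hz0, hz]
  · have hpos : 0 < ∑ i, (z i) ^ 2 :=
      lt_of_le_of_ne (Finset.sum_nonneg fun i _ => sq_nonneg _) (Ne.symm hz)
    set s := ∑ i, (z i) ^ 2 with hs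
    set c : ℝ := (Real.sqrt s)⁻¹ with hc
    have hsqrt : 0 < Real.sqrt s := Real.sqrt_pos.2 hpos
    have hc2 : c ^ 2 = s⁻¹ := by
      rw [hc, ← Real.sqrt_inv, Real.sq_sqrt (by positivity)]
    have hnorm : (∑ i, ((c • z) i) ^ 2) = 1 := by
      simp only [Pi.smul_apply, smul_eq_mul, mul_pow, ← Finset.mul_sum]
      rw [hc2, ← hs, inv_mul_cancel₀ (ne_of_gt hpos)]
    have := h1 (c • z) hnorm
    have hquad : (c • z) ⬝ᵥ B.mulVec (c • z) = c ^ 2 * (z ⬝ᵥ B.mulVec z) := by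
      rw [Matrix.mulVec_smul, smul_dotProduct, dotProduct_smul]
      simp [smul_eq_mul]; ring
    rw [hquad, hc2] at this
    have := mul_le_mul_of_nonneg_right this (le_of_lt hpos)
    calc lamB * s ≤ s⁻¹ * (z ⬝ᵥ B.mulVec z) * s := this
      _ = z ⬝ᵥ B.mulVec z := by field_simp

lemma posdef_big {n : ℕ} (a x : Fin n → ℝ) (B : Matrix (Fin n) (Fin n) ℝ) (hB : B.IsSymm)
    (t lamB ak : ℝ)
    (hray : ∀ z : Fin n → ℝ, lamB * (∑ i, (z i) ^ 2) ≤ z ⬝ᵥ B.mulVec z)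
    (hkey : 0 < lamB + 2*ak*t^2) (hak₁ : ∀ i, ak ≤ a i) (hakpos : 0 < ak) :
    ((12 : ℝ) • Matrix.diagonal (fun i => a i * (x i) ^ 2) + (2 : ℝ) • B
      + (4 * t ^ 2) • Matrix.diagonal a).PosDef := by
  have hsymm : ∀ i j, B j i = B i j := fun i j => hB.apply i j
  rw [Matrix.posDef_iff_dotProduct_mulVec]
  constructor
  · ext i j
    by_cases hij : i = j
    · subst hij; simp
    · simp [Matrix.conjTranspose_apply, Matrix.diagonal_apply_ne _ hij,
        Matrix.diagonal_apply_ne _ (Ne.symm hij), hij, Ne.symm hij, hsymm i j]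
  · intro v hv
    obtain ⟨i₀, hi₀⟩ : ∃ i, v i ≠ 0 := by
      by_contra h
      push_neg at h
      exact hv (funext fun i => h i)
    have hS : 0 < ∑ i, (v i) ^ 2 := by
      have h0 : 0 < (v i₀) ^ 2 :=
        lt_of_le_of_ne (sq_nonneg _) (Ne.symm (pow_ne_zero 2 hi₀))
      exact lt_of_lt_of_le h0 (Finset.single_le_sum (fun i _ => sq_nonneg (v i))
        (Finset.mem_univ i₀))
    have hstar : star v = v := by simp
    rw [hstar]
    have e1 : v ⬝ᵥ (Matrix.diagonal (fun i => a i * (x i) ^ 2) *ᵥ v)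
        = ∑ i, a i * (x i)^2 * (v i)^2 := by
      simp only [dotProduct, Matrix.mulVec_diagonal]
      exact Finset.sum_congr rfl fun i _ => by ring
    have e2 : v ⬝ᵥ (Matrix.diagonal a *ᵥ v) = ∑ i, a i * (v i)^2 := by
      simp only [dotProduct, Matrix.mulVec_diagonal]
      exact Finset.sum_congr rfl fun i _ => by ring
    have hexp : v ⬝ᵥ (((12 : ℝ) • Matrix.diagonal (fun i => a i * (x i) ^ 2) + (2 : ℝ) • B
        + (4 * t ^ 2) • Matrix.diagonal a) *ᵥ v)
        = 12 * (∑ i, a i * (x i)^2 * (v i)^2) + 2 * (v ⬝ᵥ B.mulVec v)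
          + 4*t^2 * (∑ i, a i * (v i)^2) := by
      rw [Matrix.add_mulVec, Matrix.add_mulVec, dotProduct_add, dotProduct_add,
        Matrix.smul_mulVec, Matrix.smul_mulVec, Matrix.smul_mulVec,
        dotProduct_smul, dotProduct_smul, dotProduct_smul, e1, e2]
      simp only [smul_eq_mul]
    rw [hexp]
    have h1 : 0 ≤ ∑ i, a i * (x i)^2 * (v i)^2 :=
      Finset.sum_nonneg fun i _ =>
        mul_nonneg (mul_nonneg (le_trans hakpos.le (hak₁ i)) (sq_nonneg _)) (sq_nonneg _)
    have h2 := hray v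
    have h3 : ak * (∑ i, (v i)^2) ≤ ∑ i, a i * (v i)^2 := by
      rw [Finset.mul_sum]
      exact Finset.sum_le_sum fun i _ =>
        mul_le_mul_of_nonneg_right (hak₁ i) (sq_nonneg _)
    nlinarith [mul_pos hS hkey, mul_le_mul_of_nonneg_left h3 (by positivity : (0:ℝ) ≤ 4*t^2),
      sq_nonneg t]

lemma convex_big {n : ℕ} (a d : Fin n → ℝ) (B : Matrix (Fin n) (Fin n) ℝ)
    (t lamB ak : ℝ) (hak₁ : ∀ i, ak ≤ a i) (hakpos : 0 < ak)
    (hray : ∀ z : Fin n → ℝ, lamB * (∑ i, (z i) ^ 2) ≤ z ⬝ᵥ B.mulVec z)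
    (hkey : 0 ≤ lamB + 2*ak*t^2) :
    ConvexOn ℝ Set.univ (fun y : Fin n → ℝ =>
      (∑ i, a i * ((y i)^4 + 2*t^2*(y i)^2 + t^4/5))
      + (∑ i, ∑ j, B i j * (y i * y j + (if i = j then t^2/3 else 0)))
      + ∑ i, d i * y i) := by
  refine ⟨convex_univ, ?_⟩
  intro u _ w _ lam mu hlam hmu hlm
  simp only [Pi.add_apply, Pi.smul_apply, smul_eq_mul]
  have hmu' : mu = 1 - lam := by linarith
  subst hmu'
  -- key algebraic identity
  have kA : lam * (∑ i, a i * ((u i)^4 + 2*t^2*(u i)^2 + t^4/5))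
      + (1 - lam) * (∑ i, a i * ((w i)^4 + 2*t^2*(w i)^2 + t^4/5))
      - (∑ i, a i * ((lam * u i + (1 - lam) * w i)^4
          + 2*t^2*(lam * u i + (1 - lam) * w i)^2 + t^4/5))
      = (∑ i, a i * (lam*(u i)^4 + (1 - lam)*(w i)^4 - (lam*u i + (1 - lam)*w i)^4))
        + lam*(1 - lam)*(2*t^2)*(∑ i, a i * (u i - w i)^2) := by
    simp only [Finset.mul_sum, ← Finset.sum_add_distrib, ← Finset.sum_sub_distrib]
    exact Finset.sum_congr rfl fun i _ => by ring
  have kB : lam * (∑ i, ∑ j, B i j * (u i * u j + (if i = j then t^2/3 else 0)))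
      + (1 - lam) * (∑ i, ∑ j, B i j * (w i * w j + (if i = j then t^2/3 else 0)))
      - (∑ i, ∑ j, B i j * ((lam * u i + (1 - lam) * w i) * (lam * u j + (1 - lam) * w j)
          + (if i = j then t^2/3 else 0)))
      = lam*(1 - lam)*(∑ i, ∑ j, B i j * ((u i - w i) * (u j - w j))) := by
    simp only [Finset.mul_sum, ← Finset.sum_add_distrib, ← Finset.sum_sub_distrib]
    exact Finset.sum_congr rfl fun i _ => Finset.sum_congr rfl fun j _ => by ring
  have kD : lam * (∑ i, d i * u i) + (1 - lam) * (∑ i, d i * w i)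
      - (∑ i, d i * (lam * u i + (1 - lam) * w i)) = 0 := by
    simp only [Finset.mul_sum, ← Finset.sum_add_distrib, ← Finset.sum_sub_distrib]
    rw [Finset.sum_eq_zero]
    intro i _
    ring
  -- nonnegativity facts
  have h4 : ∀ i : Fin n, 0 ≤ lam*(u i)^4 + (1 - lam)*(w i)^4
      - (lam*u i + (1 - lam)*w i)^4 := by
    intro i
    have h := (Even.convexOn_pow (⟨2, rfl⟩ : Even 4)).2 (Set.mem_univ (u i))
      (Set.mem_univ (w i)) hlam hmu hlm
    simp only [smul_eq_mul] at h
    linarith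
  have hsum4 : 0 ≤ ∑ i, a i * (lam*(u i)^4 + (1 - lam)*(w i)^4
      - (lam*u i + (1 - lam)*w i)^4) :=
    Finset.sum_nonneg fun i _ =>
      mul_nonneg (le_trans hakpos.le (hak₁ i)) (h4 i)
  have hQz : 0 ≤ (2*t^2)*(∑ i, a i * (u i - w i)^2)
      + ∑ i, ∑ j, B i j * ((u i - w i) * (u j - w j)) := by
    have hzz : ∑ i, ∑ j, B i j * ((u i - w i) * (u j - w j))
        = (u - w) ⬝ᵥ B.mulVec (u - w) := by
      rw [quad_as_sum]
      exact Finset.sum_congr rfl fun i _ => Finset.sum_congr rfl fun j _ => by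
        simp [Pi.sub_apply]
    have hb := hray (u - w)
    simp only [Pi.sub_apply] at hb
    have hs3 : ak * (∑ i, (u i - w i)^2) ≤ ∑ i, a i * (u i - w i)^2 := by
      rw [Finset.mul_sum]
      exact Finset.sum_le_sum fun i _ =>
        mul_le_mul_of_nonneg_right (hak₁ i) (sq_nonneg _)
    have hSnn : 0 ≤ ∑ i, (u i - w i)^2 := Finset.sum_nonneg fun i _ => sq_nonneg _
    rw [hzz]
    nlinarith [mul_nonneg hkey hSnn,
      mul_le_mul_of_nonneg_left hs3 (by positivity : (0:ℝ) ≤ 2*t^2), sq_nonneg t]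
  have hmunn : 0 ≤ lam * (1 - lam) := mul_nonneg hlam hmu
  nlinarith [mul_nonneg hmunn hQz, hsum4, kA, kB, kD]

/-- For the normal polynomial `f(x) = Σᵢ aᵢxᵢ⁴ + xᵀBx + dᵀx` with `B` symmetric and not
positive semidefinite (smallest eigenvalue `λₙ(B) < 0`, characterized via the Rayleigh
quotient) and `a_k := minᵢ aᵢ > 0`: for every `t > t₀ := √(|λₙ(B)|/(2a_k))` and every `x`,
`∇ₓₓμ_f(x,t) = 12·diag(a₁x₁²,…,aₙxₙ²) + 2B + 4t²·diag(a)` is positive definite; hence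
`μ_f(·,t)` is convex on all of `ℝⁿ` for every `t > t₀`. -/
theorem normal_polynomial_steklov_convexification {n : ℕ} (a d : Fin n → ℝ)
    (B : Matrix (Fin n) (Fin n) ℝ) (hB : B.IsSymm)
    (lamB : ℝ)
    (hlamB₁ : ∀ v : Fin n → ℝ, (∑ i, (v i) ^ 2) = 1 → lamB ≤ v ⬝ᵥ B.mulVec v)
    (hlamB₂ : ∃ v : Fin n → ℝ, (∑ i, (v i) ^ 2) = 1 ∧ v ⬝ᵥ B.mulVec v = lamB)
    (hlamBneg : lamB < 0)
    (ak : ℝ) (hak₁ : ∀ i, ak ≤ a i) (hak₂ : ∃ i, a i = ak) (hakpos : 0 < ak)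
    (f : (Fin n → ℝ) → ℝ)
    (hf : ∀ x, f x = (∑ i, a i * (x i) ^ 4) + x ⬝ᵥ B.mulVec x + d ⬝ᵥ x) :
    ∀ t > Real.sqrt (|lamB| / (2 * ak)),
      (∀ x : Fin n → ℝ,
        hess (fun y => steklov f y t) x
          = (12 : ℝ) • Matrix.diagonal (fun i => a i * (x i) ^ 2) + (2 : ℝ) • B
            + (4 * t ^ 2) • Matrix.diagonal a
        ∧ ((12 : ℝ) • Matrix.diagonal (fun i => a i * (x i) ^ 2) + (2 : ℝ) • B
            + (4 * t ^ 2) • Matrix.diagonal a).PosDef)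
      ∧ ConvexOn ℝ Set.univ (fun y => steklov f y t) := by
  intro t ht
  have hq : 0 ≤ |lamB| / (2 * ak) := by positivity
  have htpos : 0 < t := lt_of_le_of_lt (Real.sqrt_nonneg _) ht
  have ht2 : |lamB| / (2 * ak) < t ^ 2 := by
    nlinarith [Real.sq_sqrt hq, Real.sqrt_nonneg (|lamB| / (2 * ak))]
  have habs : |lamB| < 2 * ak * t ^ 2 := by
    rw [div_lt_iff₀ (by positivity)] at ht2
    linarith
  have hkey : 0 < lamB + 2 * ak * t ^ 2 := by
    rw [abs_of_neg hlamBneg] at habs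
    linarith
  have hray : ∀ z : Fin n → ℝ, lamB * (∑ i, (z i) ^ 2) ≤ z ⬝ᵥ B.mulVec z :=
    rayleigh B lamB hlamB₁
  have hfun : (fun y => steklov f y t) = (fun y : Fin n → ℝ =>
      (∑ i, a i * ((y i)^4 + 2*t^2*(y i)^2 + t^4/5))
      + (∑ i, ∑ j, B i j * (y i * y j + (if i = j then t^2/3 else 0)))
      + ∑ i, d i * y i) :=
    funext fun y => steklov_eq a d B f hf htpos y
  rw [hfun]
  constructor
  · intro x
    constructor
    · ext i j
      show pd i (pd j _) x = _
      rw [pdG a d B t j, pdPg a d B t i j]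
      have hsymm : B j i = B i j := hB.apply i j
      by_cases hij : i = j
      · subst hij
        simp [Matrix.add_apply, Matrix.smul_apply, Matrix.diagonal_apply_eq, smul_eq_mul]
        ring
      · simp [Matrix.add_apply, Matrix.smul_apply, Matrix.diagonal_apply_ne _ hij, hij,
          smul_eq_mul, hsymm]
        ring
    · exact posdef_big a x B hB t lamB ak hray hkey hak₁ hakpos
  · exact convex_big a d B t lamB ak hak₁ hakpos hray hkey.le
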